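/- Let C be a convex subset of a real linear space, h : (0,∞) → ℝ a strictly positive multiplicative function (h(xy) = h(x)h(y) for all x,y > 0), and f : C → ℝ nonnegative and h-convex on C. Then for all x, y ∈ C and s ≥ 0 with (1+s)x − sy ∈ C, one has f((1+s)x − sy) ≥ h(1+s)f(x) − h(s)f(y). -/

import Mathlib

theorem hconvex_mercer_type_lower_bound
    {X : Type*} [AddCommGroup X] [Module ℝ X]
    (C : Set X) (hC : Convex ℝ C)
    (h : ℝ → ℝ) (hpos : ∀ t : ℝ, 0 < t → 0 < h t)
    (hmul : ∀ x y : ℝ, 0 < x → 0 < y → h (x * y) = h x * h y)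
    (f : X → ℝ) (hf : ∀ x ∈ C, 0 ≤ f x)
    (hconv : ∀ x ∈ C, ∀ y ∈ C, ∀ t ∈ Set.Icc (0:ℝ) 1,
        f (t • x + (1 - t) • y) ≤ h t * f x + h (1 - t) * f y) :
    ∀ x ∈ C, ∀ y ∈ C, ∀ s : ℝ, 0 ≤ s → (1 + s) • x - s • y ∈ C →
      h (1 + s) * f x - h s * f y ≤ f ((1 + s) • x - s • y) := by
  intro x hx y hy s hs hz
  have h1 : h 1 = 1 := by
    have e := hmul 1 1 one_pos one_pos
    rw [mul_one] at e
    exact mul_left_cancel₀ (hpos 1 one_pos).ne' (by rw [mul_one, ← e])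
  rcases eq_or_lt_of_le hs with rfl | hs'
  · have key := hconv y hy y hy 0 ⟨le_refl 0, zero_le_one⟩
    simp only [zero_smul, sub_zero, one_smul, zero_add, h1, one_mul, add_zero] at key ⊢
    linarith
  · have hs1 : (0:ℝ) < 1 + s := by linarith
    set t : ℝ := 1 / (1 + s) with ht_def
    have ht : 0 < t := by positivity
    have ht1 : t ≤ 1 := by
      rw [ht_def, div_le_one hs1]; linarith
    have hmt : 1 - t = s / (1 + s) := by
      rw [ht_def]; field_simp; ring
    have hmt0 : 0 < 1 - t := by rw [hmt]; positivity
    have key : t • ((1 + s) • x - s • y) + (1 - t) • y = x := by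
      match_scalars <;> (rw [ht_def]; field_simp) <;> ring
    have main := hconv _ hz y hy t ⟨ht.le, ht1⟩
    rw [key] at main
    have e1 : h (1 + s) * h t = 1 := by
      rw [← hmul _ _ hs1 ht, ht_def, mul_one_div, div_self hs1.ne', h1]
    have e2 : h (1 + s) * h (1 - t) = h s := by
      rw [← hmul _ _ hs1 hmt0, hmt, mul_div_cancel₀ _ hs1.ne']
    have main' := mul_le_mul_of_nonneg_left main (hpos _ hs1).le
    have expand : h (1 + s) * (h t * f ((1 + s) • x - s • y) + h (1 - t) * f y)
        = f ((1 + s) • x - s • y) + h s * f y := by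
      rw [mul_add, ← mul_assoc, ← mul_assoc, e1, e2, one_mul]
    rw [expand] at main'
    linarith
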